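/- Let ξ be a swap-invariant random vector in ℝⁿ whose coordinates take only the two values a and b with |a| ≠ |b|. Then ξ is exchangeable. -/

import Mathlib

open MeasureTheory

section Aux

lemma kinkLemma {ι : Type*} [Fintype ι] (m r : ι → ℝ) (C : ℝ)
    (h : ∀ t : ℝ, ∑ i, m i * |t - r i| = C) (c : ℝ) :
    ∑ i ∈ Finset.univ.filter (fun i => r i = c), m i = 0 := by
  classical
  obtain ⟨ε, hε0, hεlt⟩ : ∃ ε : ℝ, 0 < ε ∧ ∀ i, r i ≠ c → ε < |r i - c| := by
    set B := Finset.univ.filter (fun i => r i ≠ c) with hB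
    by_cases hBne : B.Nonempty
    · refine ⟨(B.inf' hBne fun i => |r i - c|) / 2, ?_, ?_⟩
      · have h1 : 0 < B.inf' hBne fun i => |r i - c| := by
          rw [Finset.lt_inf'_iff]
          intro i hi
          exact abs_pos.2 (sub_ne_zero.2 ((Finset.mem_filter.1 hi).2))
        linarith
      · intro i hi
        have h1 : B.inf' hBne (fun i => |r i - c|) ≤ |r i - c| :=
          Finset.inf'_le _ (by simp [hB, hi])
        have h2 : 0 < B.inf' hBne fun i => |r i - c| := by
          rw [Finset.lt_inf'_iff]
          intro i hi
          exact abs_pos.2 (sub_ne_zero.2 ((Finset.mem_filter.1 hi).2))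
        linarith
    · exact ⟨1, one_pos, fun i hi => absurd ⟨i, by simp [hB, hi]⟩ hBne⟩
  have hbr : ∀ i, m i * |c + ε - r i| + m i * |c - ε - r i| - 2 * (m i * |c - r i|)
      = if r i = c then m i * (2 * ε) else 0 := by
    intro i
    by_cases hi : r i = c
    · rw [if_pos hi, hi]
      have e1 : |c + ε - c| = ε := by rw [abs_of_pos (by linarith)]; ring_nf
      have e2 : |c - ε - c| = ε := by rw [abs_of_neg (by linarith)]; ring
      have e3 : |c - c| = 0 := by simp
      rw [e1, e2, e3]; ring
    · rw [if_neg hi]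
      have hlt := hεlt i hi
      rcases lt_or_gt_of_ne hi with hlt2 | hlt2
      · have h1 : ε < c - r i := by
          rwa [abs_of_neg (by linarith : r i - c < 0), neg_sub] at hlt
        have e1 : |c + ε - r i| = c + ε - r i := abs_of_pos (by linarith)
        have e2 : |c - ε - r i| = c - ε - r i := abs_of_pos (by linarith)
        have e3 : |c - r i| = c - r i := abs_of_pos (by linarith)
        rw [e1, e2, e3]; ring
      · have h1 : ε < r i - c := by
          rwa [abs_of_pos (by linarith : (0:ℝ) < r i - c)] at hlt
        have e1 : |c + ε - r i| = -(c + ε - r i) := abs_of_neg (by linarith)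
        have e2 : |c - ε - r i| = -(c - ε - r i) := abs_of_neg (by linarith)
        have e3 : |c - r i| = -(c - r i) := abs_of_neg (by linarith)
        rw [e1, e2, e3]; ring
  have hsum : ∑ i, (m i * |c + ε - r i| + m i * |c - ε - r i| - 2 * (m i * |c - r i|)) = 0 := by
    rw [Finset.sum_sub_distrib, Finset.sum_add_distrib, ← Finset.mul_sum, h (c + ε), h (c - ε),
      h c]
    ring
  rw [Finset.sum_congr rfl (fun i _ => hbr i)] at hsum
  rw [← Finset.sum_filter] at hsum
  rw [← Finset.sum_mul] at hsum
  have h2ε : (2 : ℝ) * ε ≠ 0 := by positivity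
  exact (mul_eq_zero.1 hsum).resolve_right h2ε

lemma existsEval {ι : Type*} (s : Finset ι) (n : ℕ) (φ : ι → Fin n → ℝ)
    (hφ : ∀ i ∈ s, ∃ j, φ i j ≠ 0) :
    ∃ x : ℝ, ∀ i ∈ s, ∑ j, φ i j * x ^ (j : ℕ) ≠ 0 := by
  classical
  set p : ι → Polynomial ℝ := fun i => ∑ j, Polynomial.C (φ i j) * Polynomial.X ^ (j : ℕ)
    with hp
  have hpne : ∀ i ∈ s, p i ≠ 0 := by
    intro i hi h0
    obtain ⟨j, hj⟩ := hφ i hi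
    have hc : (p i).coeff (j : ℕ) = φ i j := by
      rw [hp]
      simp only [Polynomial.finset_sum_coeff, Polynomial.coeff_C_mul, Polynomial.coeff_X_pow]
      rw [Finset.sum_eq_single j]
      · simp
      · intro j' _ hj'
        rw [if_neg (fun h => hj' (Fin.ext h.symm)), mul_zero]
      · intro h; exact absurd (Finset.mem_univ _) h
    rw [h0] at hc
    simp at hc
    exact hj hc.symm
  have hprod : (∏ i ∈ s, p i) ≠ 0 := Finset.prod_ne_zero_iff.2 hpne
  have hex : ∃ x : ℝ, Polynomial.eval x (∏ i ∈ s, p i) ≠ 0 := by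
    by_contra hcon
    push_neg at hcon
    exact hprod (Polynomial.funext fun x => by simpa using hcon x)
  obtain ⟨x, hx⟩ := hex
  refine ⟨x, fun i hi h0 => ?_⟩
  apply hx
  rw [Polynomial.eval_prod]
  apply Finset.prod_eq_zero hi
  rw [hp]
  rw [Polynomial.eval_finset_sum]
  simp only [Polynomial.eval_mul, Polynomial.eval_C, Polynomial.eval_pow, Polynomial.eval_X]
  exact h0

end Aux

theorem stmt_13 {Ω : Type*} [MeasurableSpace Ω] (P : Measure Ω)
    [IsProbabilityMeasure P] (n : ℕ) (ξ : Ω → Fin n → ℝ)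
    (hmeas : Measurable ξ) (hint : ∀ j, Integrable (fun ω => ξ ω j) P)
    (a b : ℝ) (hab : |a| ≠ |b|)
    (hval : ∀ ω j, ξ ω j = a ∨ ξ ω j = b)
    (hswap : ∀ (u : Fin n → ℝ) (π : Equiv.Perm (Fin n)),
      ∫ ω, |∑ j, u j * ξ ω (π j)| ∂P = ∫ ω, |∑ j, u j * ξ ω j| ∂P) :
    ∀ π : Equiv.Perm (Fin n),
      P.map (fun ω => fun j => ξ ω (π j)) = P.map ξ := by
  classical
  have hA : a ≠ b := fun h => hab (by rw [h])
  have hsq : a * a ≠ b * b := fun h => hab (abs_eq_abs.2 (mul_self_eq_mul_self_iff.1 h))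
  set V : Finset (Fin n) → Fin n → ℝ := fun S j => if j ∈ S then a else b with hVdef
  have hVinj : Function.Injective V := by
    intro S S' h
    ext j
    have hj := congrFun h j
    by_cases h1 : j ∈ S <;> by_cases h2 : j ∈ S' <;>
      simp only [hVdef, h1, h2, if_pos, if_neg, if_true, if_false] at hj <;>
      simp_all
  set TS : Ω → Finset (Fin n) := fun ω => Finset.univ.filter fun j => ξ ω j = a with hTSdef
  have hξV : ∀ ω, ξ ω = V (TS ω) := by
    intro ω
    funext j
    simp only [hVdef, hTSdef, Finset.mem_filter, Finset.mem_univ, true_and]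
    rcases hval ω j with h | h
    · rw [h, if_pos rfl]
    · rw [h, if_neg (fun h' => hA h'.symm)]
  set A : Finset (Fin n) → Set Ω := fun S => ξ ⁻¹' {V S} with hAdef
  have hAmeas : ∀ S, MeasurableSet (A S) := fun S => hmeas (measurableSet_singleton _)
  have hmemA : ∀ ω S, ω ∈ A S ↔ TS ω = S := by
    intro ω S
    simp only [hAdef, Set.mem_preimage, Set.mem_singleton_iff]
    rw [hξV ω]
    exact ⟨fun h => hVinj h, fun h => by rw [h]⟩
  set pr : Finset (Fin n) → ℝ := fun S => (P (A S)).toReal with hprdef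
  have int_simple : ∀ F : (Fin n → ℝ) → ℝ,
      ∫ ω, F (ξ ω) ∂P = ∑ S, pr S * F (V S) := by
    intro F
    have hpt : ∀ ω, F (ξ ω) = ∑ S, Set.indicator (A S) (fun _ => F (V S)) ω := by
      intro ω
      rw [Finset.sum_eq_single (TS ω)]
      · rw [Set.indicator_of_mem ((hmemA ω _).2 rfl), hξV ω]
      · intro S _ hS
        exact Set.indicator_of_notMem (fun h => hS (((hmemA ω S).1 h).symm ▸ rfl)) _
      · intro h; exact absurd (Finset.mem_univ _) h
    rw [integral_congr_ae (Filter.Eventually.of_forall hpt),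
      integral_finset_sum _ (fun S _ => (integrable_const _).indicator (hAmeas S))]
    refine Finset.sum_congr rfl fun S _ => ?_
    rw [integral_indicator_const _ (hAmeas S), smul_eq_mul]; rfl
  have hVperm : ∀ (π : Equiv.Perm (Fin n)) (S : Finset (Fin n)) (j : Fin n),
      V S (π j) = V (S.image π.symm) j := by
    intro π S j
    simp only [hVdef]
    have hiff : π j ∈ S ↔ j ∈ S.image π.symm := by
      simp only [Finset.mem_image]
      constructor
      · intro h; exact ⟨π j, h, π.symm_apply_apply j⟩
      · rintro ⟨x, hx, rfl⟩; rwa [π.apply_symm_apply]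
    rw [if_congr hiff rfl rfl]
  set c : Finset (Fin n) → (Fin n → ℝ) → ℝ := fun S u => ∑ j, u j * V S j with hcdef
  have repr : ∀ (π : Equiv.Perm (Fin n)) (u : Fin n → ℝ),
      ∫ ω, |∑ j, u j * ξ ω (π j)| ∂P = ∑ S, pr (S.image π) * |c S u| := by
    intro π u
    rw [int_simple (fun y => |∑ j, u j * y (π j)|)]
    have e1 : ∀ S : Finset (Fin n), |∑ j, u j * V S (π j)| = |c (S.image π.symm) u| := by
      intro S
      congr 1
      rw [hcdef]
      exact Finset.sum_congr rfl fun j _ => by rw [hVperm π S j]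
    rw [Finset.sum_congr rfl fun S _ => by rw [e1 S]]
    apply Fintype.sum_equiv (Equiv.finsetCongr π.symm)
    intro S
    simp only [Equiv.finsetCongr_apply, Finset.map_eq_image, Equiv.coe_toEmbedding,
      Finset.image_image, Equiv.self_comp_symm, Finset.image_id]
  have key : ∀ (π : Equiv.Perm (Fin n)) (S : Finset (Fin n)), pr (S.image π) = pr S := by
    intro π
    set q : Finset (Fin n) → ℝ := fun S => pr (S.image π) - pr S with hqdef
    have hq : ∀ u : Fin n → ℝ, ∑ S, q S * |c S u| = 0 := by
      intro u
      have h1 := repr π u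
      have h2 := repr 1 u
      simp only [Equiv.Perm.coe_one, id_eq, Finset.image_id] at h2
      have h3 := hswap u π
      rw [h1, h2] at h3
      simp only [hqdef, sub_mul]
      rw [Finset.sum_sub_distrib, h3, sub_self]
    suffices hqz : ∀ S, q S = 0 by
      intro S
      exact sub_eq_zero.1 (hqz S)
    intro S₀
    by_cases hS0e : S₀ = ∅
    · simp [hqdef, hS0e]
    by_cases hS0u : S₀ = Finset.univ
    · simp [hqdef, hS0u]
    have hdiff : ∀ S : Finset (Fin n), S ≠ S₀ → ∃ j, V S j ≠ V S₀ j := by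
      intro S hS
      by_contra hcon
      push_neg at hcon
      exact hS (hVinj (funext hcon))
    have hex_notmem : ∃ j, j ∉ S₀ := by
      by_contra hcon
      push_neg at hcon
      exact hS0u (Finset.eq_univ_iff_forall.2 hcon)
    have hkey : ∃ k, V S₀ k ≠ 0 ∧ ∀ S, S ≠ S₀ → V S k ≠ 0 →
        ∃ j, V S j * V S₀ k - V S₀ j * V S k ≠ 0 := by
      by_cases ha : a = 0
      · have hb : b ≠ 0 := fun hb => hA (ha.trans hb.symm)
        obtain ⟨k, hk⟩ := hex_notmem
        have hd0 : V S₀ k = b := by simp [hVdef, hk]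
        refine ⟨k, by rw [hd0]; exact hb, ?_⟩
        intro S hS hdS
        obtain ⟨j, hj⟩ := hdiff S hS
        have hkS : k ∉ S := by
          intro hkS
          apply hdS
          simp [hVdef, hkS, ha]
        have hdS' : V S k = b := by simp [hVdef, hkS]
        refine ⟨j, ?_⟩
        rw [hd0, hdS']
        intro h0
        exact hj (mul_right_cancel₀ hb (by linarith))
      · obtain ⟨k, hk⟩ := Finset.nonempty_iff_ne_empty.2 hS0e
        have hd0 : V S₀ k = a := by simp [hVdef, hk]
        refine ⟨k, by rw [hd0]; exact ha, ?_⟩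
        intro S hS hdS
        by_cases hkS : k ∈ S
        · obtain ⟨j, hj⟩ := hdiff S hS
          have hdS' : V S k = a := by simp [hVdef, hkS]
          refine ⟨j, ?_⟩
          rw [hd0, hdS']
          intro h0
          exact hj (mul_right_cancel₀ ha (by linarith))
        · have hdS' : V S k = b := by simp [hVdef, hkS]
          have hb : b ≠ 0 := by rw [hdS'] at hdS; exact hdS
          obtain ⟨j, hj⟩ := hex_notmem
          have hV0j : V S₀ j = b := by simp [hVdef, hj]
          refine ⟨j, ?_⟩
          rw [hd0, hdS', hV0j]
          by_cases hjS : j ∈ S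
          · have hVj : V S j = a := by simp [hVdef, hjS]
            rw [hVj]
            intro h0
            exact hsq (by linarith)
          · have hVj : V S j = b := by simp [hVdef, hjS]
            rw [hVj]
            intro h0
            exact hA (mul_left_cancel₀ hb (by linarith))
    obtain ⟨k, hd₀, hkey2⟩ := hkey
    set sbad : Finset (Finset (Fin n)) :=
      Finset.univ.filter (fun S => S ≠ S₀ ∧ V S k ≠ 0) with hsdef
    obtain ⟨x, hx⟩ := existsEval sbad n (fun S j => V S j * V S₀ k - V S₀ j * V S k)
      (fun S hS => hkey2 S (Finset.mem_filter.1 hS).2.1 (Finset.mem_filter.1 hS).2.2)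
    set w : Fin n → ℝ := fun j => x ^ (j : ℕ) with hwdef
    set m : Finset (Fin n) → ℝ := fun S => if V S k = 0 then 0 else q S * |V S k| with hmdef
    set r : Finset (Fin n) → ℝ := fun S => -(c S w) / V S k with hrdef
    have hcS : ∀ (t : ℝ) (S : Finset (Fin n)),
        c S (fun j => w j + if j = k then t else 0) = c S w + t * V S k := by
      intro t S
      simp only [hcdef, add_mul]
      rw [Finset.sum_add_distrib]
      congr 1
      simp [ite_mul]
    have hptw : ∀ (t : ℝ) (S : Finset (Fin n)), q S * |c S w + t * V S k|
        = m S * |t - r S| + (if V S k = 0 then q S * |c S w| else 0) := by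
      intro t S
      by_cases hd : V S k = 0
      · simp [hmdef, hd]
      · have he : c S w + t * V S k = V S k * (t - -(c S w) / V S k) := by
          field_simp
          ring
        rw [hmdef, hrdef]
        simp only [if_neg hd]
        rw [he, abs_mul]
        ring
    have hCsum : ∀ t : ℝ, ∑ S, m S * |t - r S| =
        -∑ S, (if V S k = 0 then q S * |c S w| else 0) := by
      intro t
      have h0 := hq (fun j => w j + if j = k then t else 0)
      have h1 : ∑ S, q S * |c S w + t * V S k| = 0 := by
        rw [← h0]
        exact Finset.sum_congr rfl fun S _ => by rw [hcS t S]
      have h2 : ∑ S, (m S * |t - r S| + (if V S k = 0 then q S * |c S w| else 0)) = 0 :=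
        (Finset.sum_congr rfl fun S _ => (hptw t S).symm).trans h1
      rw [Finset.sum_add_distrib] at h2
      linarith
    have hk0 := kinkLemma m r _ hCsum (r S₀)
    have hone : ∑ S ∈ Finset.univ.filter (fun S => r S = r S₀), m S = m S₀ := by
      apply Finset.sum_eq_single_of_mem
      · simp
      · intro S hS hne
        by_cases hd : V S k = 0
        · simp [hmdef, hd]
        · exfalso
          have hSs : S ∈ sbad := by simp [hsdef, hne, hd]
          have hr : r S = r S₀ := (Finset.mem_filter.1 hS).2
          simp only [hrdef] at hr
          have hcross : c S w * V S₀ k = c S₀ w * V S k := by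
            have h3 := (div_eq_div_iff hd hd₀).1 hr
            linarith
          apply hx S hSs
          have hexp : ∑ j, (V S j * V S₀ k - V S₀ j * V S k) * x ^ (j : ℕ)
              = c S w * V S₀ k - c S₀ w * V S k := by
            simp only [hcdef, hwdef, Finset.sum_mul, ← Finset.sum_sub_distrib]
            exact Finset.sum_congr rfl fun j _ => by ring
          rw [hexp, hcross, sub_self]
    rw [hone] at hk0
    simp only [hmdef, if_neg hd₀] at hk0
    rcases mul_eq_zero.1 hk0 with h | h
    · exact h
    · exact absurd h (abs_ne_zero.2 hd₀)
  have hPA : ∀ (π : Equiv.Perm (Fin n)) (S : Finset (Fin n)),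
      P (A (S.image π)) = P (A S) := by
    intro π S
    have h := key π S
    simp only [hprdef] at h
    exact (ENNReal.toReal_eq_toReal_iff' (measure_ne_top P _) (measure_ne_top P _)).1 h
  intro π
  have hmeasf : Measurable fun ω => fun j => ξ ω (π j) :=
    measurable_pi_lambda _ fun j => (measurable_pi_apply (π j)).comp hmeas
  apply Measure.ext
  intro s hs
  rw [Measure.map_apply hmeasf hs, Measure.map_apply hmeas hs]
  have hdisj : ∀ F : Finset (Finset (Fin n)), (↑F : Set (Finset (Fin n))).PairwiseDisjoint A := by
    intro F S hS S' hS' hne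
    rw [Function.onFun, Set.disjoint_left]
    intro ω h1 h2
    exact hne (((hmemA ω S).1 h1).symm.trans ((hmemA ω S').1 h2))
  have hfω : ∀ ω, (fun j => ξ ω (π j)) = V ((TS ω).image π.symm) := by
    intro ω
    funext j
    rw [hξV ω, hVperm π (TS ω) j]
  have hpre1 : ξ ⁻¹' s = ⋃ S ∈ Finset.univ.filter (fun S => V S ∈ s), A S := by
    ext ω
    simp only [Set.mem_preimage, Set.mem_iUnion, Finset.mem_filter, Finset.mem_univ, true_and,
      exists_prop]
    constructor
    · intro h
      exact ⟨TS ω, by rwa [← hξV ω], (hmemA ω _).2 rfl⟩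
    · rintro ⟨S, hVS, hAS⟩
      rw [hξV ω, (hmemA ω S).1 hAS]
      exact hVS
  have hpre2 : (fun ω => fun j => ξ ω (π j)) ⁻¹' s
      = ⋃ S ∈ Finset.univ.filter (fun S => V (S.image π.symm) ∈ s), A S := by
    ext ω
    simp only [Set.mem_preimage, Set.mem_iUnion, Finset.mem_filter, Finset.mem_univ, true_and,
      exists_prop]
    constructor
    · intro h
      refine ⟨TS ω, ?_, (hmemA ω _).2 rfl⟩
      rwa [← hfω ω]
    · rintro ⟨S, hVS, hAS⟩
      rw [hfω ω, (hmemA ω S).1 hAS]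
      exact hVS
  rw [hpre1, hpre2,
    measure_biUnion_finset (hdisj _) (fun S _ => hAmeas S),
    measure_biUnion_finset (hdisj _) (fun S _ => hAmeas S),
    Finset.sum_filter, Finset.sum_filter]
  apply Fintype.sum_equiv (Equiv.finsetCongr π.symm)
  intro S
  simp only [Equiv.finsetCongr_apply, Finset.map_eq_image, Equiv.coe_toEmbedding,
    Finset.image_image, Equiv.self_comp_symm, Finset.image_id]
  rw [hPA π.symm S]
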